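/- Let D be a Prüfer domain, I a nonzero finitely generated proper ideal of D, and Q a minimal prime of I. Then there exists a prime ideal Q₀ ⊊ Q such that there is no prime ideal strictly between Q₀ and Q. -/

import Mathlib

/-- In a Prüfer domain, every prime minimal over a nonzero finitely generated
proper ideal has an immediate predecessor in `Spec(D)`. -/
theorem stmt17 (D : Type*) [CommRing D] [IsDomain D]
    (hPruf : ∀ (P : Ideal D) [P.IsPrime], ValuationRing (Localization.AtPrime P))
    (I : Ideal D) (hI0 : I ≠ ⊥) (hIfg : I.FG) (hItop : I ≠ ⊤)
    (Q : Ideal D) (hQ : Q ∈ I.minimalPrimes) :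
    ∃ Q₀ : Ideal D, Q₀.IsPrime ∧ Q₀ < Q ∧
      ¬∃ L : Ideal D, L.IsPrime ∧ Q₀ < L ∧ L < Q := by
  classical
  obtain ⟨⟨hQp, hIQ⟩, hQmin⟩ := hQ
  haveI := hQp
  haveI := hPruf Q
  set f : D →+* Localization.AtPrime Q := algebraMap D (Localization.AtPrime Q) with hf
  -- comap of map recovers primes contained in Q
  have key : ∀ P : Ideal D, P.IsPrime → P ≤ Q →
      Ideal.comap f (Ideal.map f P) = P := by
    intro P hP hPQ
    exact IsLocalization.comap_map_of_isPrime_disjoint Q.primeCompl _ (I := P) hP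
      (Set.disjoint_left.mpr fun x hx hxP => hx (hPQ hxP))
  -- primes contained in Q form a chain
  have chain : ∀ P₁ P₂ : Ideal D, P₁.IsPrime → P₂.IsPrime → P₁ ≤ Q → P₂ ≤ Q →
      P₁ ≤ P₂ ∨ P₂ ≤ P₁ := by
    intro P₁ P₂ h₁ h₂ h₁Q h₂Q
    rcases (ValuationRing.le_total_ideal (A := Localization.AtPrime Q)).total (Ideal.map f P₁) (Ideal.map f P₂) with h | h
    · left
      calc P₁ = Ideal.comap f (Ideal.map f P₁) := (key P₁ h₁ h₁Q).symm
        _ ≤ Ideal.comap f (Ideal.map f P₂) := Ideal.comap_mono h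
        _ = P₂ := key P₂ h₂ h₂Q
    · right
      calc P₂ = Ideal.comap f (Ideal.map f P₂) := (key P₂ h₂ h₂Q).symm
        _ ≤ Ideal.comap f (Ideal.map f P₁) := Ideal.comap_mono h
        _ = P₁ := key P₁ h₁ h₁Q
  -- find a generator whose image divides the image of every generator
  obtain ⟨s, hs⟩ := hIfg
  have hsne : s.Nonempty := by
    rcases s.eq_empty_or_nonempty with rfl | h
    · exact absurd (hs.symm.trans (by simp)) hI0
    · exact h
  have hmin : ∀ t : Finset D, t.Nonempty → ∃ a ∈ t, ∀ b ∈ t, f a ∣ f b := by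
    intro t ht
    induction t using Finset.induction_on with
    | empty => exact absurd ht (by simp)
    | @insert x t hxt ih =>
      rcases t.eq_empty_or_nonempty with rfl | ht'
      · exact ⟨x, by simp, by simp⟩
      · obtain ⟨a, ha, hall⟩ := ih ht'
        rcases ValuationRing.dvd_total (f a) (f x) with h | h
        · refine ⟨a, Finset.mem_insert_of_mem ha, fun b hb => ?_⟩
          rcases Finset.mem_insert.mp hb with rfl | hb
          · exact h
          · exact hall b hb
        · refine ⟨x, Finset.mem_insert_self _ _, fun b hb => ?_⟩
          rcases Finset.mem_insert.mp hb with rfl | hb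
          · exact dvd_rfl
          · exact h.trans (hall b hb)
  obtain ⟨a, haS, hadvd⟩ := hmin s hsne
  have haI : a ∈ I := hs ▸ Ideal.subset_span haS
  have hImap : Ideal.map f I ≤ Ideal.span {f a} := by
    rw [← hs, Ideal.map_span]
    refine Ideal.span_le.mpr ?_
    rintro y ⟨b, hb, rfl⟩
    exact Ideal.mem_span_singleton.mpr (hadvd b hb)
  -- a is in no prime strictly below Q
  have hanot : ∀ P : Ideal D, P.IsPrime → P < Q → a ∉ P := by
    intro P hP hPQ haP
    have h1 : Ideal.map f I ≤ Ideal.map f P :=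
      hImap.trans (Ideal.span_le.mpr (by
        simp only [Set.singleton_subset_iff]
        exact Ideal.mem_map_of_mem f haP))
    have h2 : I ≤ P := by
      have := Ideal.comap_mono (f := f) h1
      rw [key P hP hPQ.le] at this
      exact (Ideal.le_comap_map).trans this
    exact hPQ.ne (le_antisymm hPQ.le (hQmin ⟨hP, h2⟩ hPQ.le))
  -- the union of primes strictly below Q
  set S : Set (Ideal D) := {P : Ideal D | P.IsPrime ∧ P < Q} with hS
  have hSne : S.Nonempty := by
    refine ⟨⊥, Ideal.bot_prime, bot_lt_iff_ne_bot.mpr ?_⟩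
    rintro rfl
    exact hI0 (le_bot_iff.mp hIQ)
  have hSdir : DirectedOn (· ≤ ·) S := by
    intro P₁ h₁ P₂ h₂
    rcases chain P₁ P₂ h₁.1 h₂.1 h₁.2.le h₂.2.le with h | h
    · exact ⟨P₂, h₂, h, le_rfl⟩
    · exact ⟨P₁, h₁, le_rfl, h⟩
  set Q₀ : Ideal D := sSup S with hQ₀
  have hmem : ∀ z : D, z ∈ Q₀ ↔ ∃ P ∈ S, z ∈ P := fun z =>
    Submodule.mem_sSup_of_directed hSne hSdir
  have hQ₀Q : Q₀ ≤ Q := sSup_le fun P hP => hP.2.le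
  have haQ₀ : a ∉ Q₀ := by
    intro h
    obtain ⟨P, hP, haP⟩ := (hmem a).mp h
    exact hanot P hP.1 hP.2 haP
  have hQ₀prime : Q₀.IsPrime := by
    constructor
    · intro h
      exact haQ₀ (h ▸ Submodule.mem_top)
    · intro x y hxy
      obtain ⟨P, hP, hxyP⟩ := (hmem (x * y)).mp hxy
      rcases hP.1.mem_or_mem hxyP with h | h
      · exact Or.inl (le_sSup hP h)
      · exact Or.inr (le_sSup hP h)
  refine ⟨Q₀, hQ₀prime, lt_of_le_of_ne hQ₀Q fun h => haQ₀ (h ▸ hIQ haI), ?_⟩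
  rintro ⟨L, hL, h1, h2⟩
  exact h1.not_ge (le_sSup ⟨hL, h2⟩)
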